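/- Let X be a pure d-complex, F a sheaf on X, 0 ≤ k ≤ d−2, and suppose F(x) ≠ 0 for all x in X(k) ∪ X(k+1) ∪ X(k+2). Let Q = D(X) be the maximal number of d-faces containing a vertex. If (X,F) β-expands α-small locally minimal k-cocycles and β'-expands α'-small locally minimal (k+1)-cocycles (both for some β,β' > 0), then (X,F) is a (min{α', ((k+1)Q/(d+1))^{-1}·C(d+1,k+2)^{-1}}, α)-cosystolic expander in dimension k: (C1) ‖d_k f‖_ws ≥ ε·dist_ws(f, Z^k) for all f ∈ C^k with ε = min{α', (d+1)/((k+1)Q)·C(d+1,k+2)^{-1}}, and (C2) ‖f‖_ws ≥ α for all f ∈ Z^k \ B^k. -/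

import Mathlib

open Finset

variable {V : Type} [LinearOrder V]

/-- A (finite) simplicial complex: a nonempty collection of finite subsets of the vertex
type `V`, closed under taking subsets. -/
def IsComplex (X : Finset (Finset V)) : Prop :=
  X.Nonempty ∧ ∀ s ∈ X, ∀ t ⊆ s, t ∈ X

/-- The faces of `X` having exactly `j` vertices, i.e. of dimension `j - 1`. -/
def faceSet (X : Finset (Finset V)) (j : ℕ) : Finset (Finset V) :=
  X.filter fun s => s.card = j

/-- `X` is pure of dimension `d`: every face is contained in a face with `d + 1` vertices. -/
def IsPure (X : Finset (Finset V)) (d : ℕ) : Prop :=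
  ∀ s ∈ X, ∃ t ∈ X, s ⊆ t ∧ t.card = d + 1

/-- The canonical weight of a face `x` of a pure `d`-dimensional complex `X`:
`w(x) = C(d+1, |x|)⁻¹ ⬝ |X(d)|⁻¹ ⬝ #{y ∈ X(d) : x ⊆ y}`. -/
noncomputable def wt (X : Finset (Finset V)) (d : ℕ) (x : Finset V) : ℝ :=
  ((d + 1).choose x.card : ℝ)⁻¹ * ((faceSet X (d + 1)).card : ℝ)⁻¹ *
    (((faceSet X (d + 1)).filter fun y => x ⊆ y).card : ℝ)
/-- A sheaf of `R`-modules on the simplicial complex `X`: an `R`-module `Stalk x` for every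
face `x`, and compatible restriction maps along inclusions of faces. -/
structure PSheaf (R : Type) [CommRing R] {V : Type} (X : Finset (Finset V)) where
  Stalk : Finset V → Type
  [stalkAddCommGroup : ∀ x, AddCommGroup (Stalk x)]
  [stalkModule : ∀ x, Module R (Stalk x)]
  res : ∀ {x y : Finset V}, x ∈ X → y ∈ X → x ⊆ y → (Stalk x →ₗ[R] Stalk y)
  res_refl : ∀ {x : Finset V} (hx : x ∈ X) (v : Stalk x),
    res hx hx (Finset.Subset.refl x) v = v
  res_trans : ∀ {x y z : Finset V} (hx : x ∈ X) (hy : y ∈ X) (hz : z ∈ X)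
    (hxy : x ⊆ y) (hyz : y ⊆ z) (v : Stalk x),
    res hy hz hyz (res hx hy hxy v) = res hx hz (hxy.trans hyz) v

attribute [instance] PSheaf.stalkAddCommGroup PSheaf.stalkModule

variable {R : Type} [CommRing R]

/-- The faces of `X` of dimension `k`, i.e. with `k + 1` vertices. -/
def Face (X : Finset (Finset V)) (k : ℕ) : Type :=
  {s : Finset V // s ∈ X ∧ s.card = k + 1}

/-- `k`-cochains with coefficients in the sheaf `S`. -/
abbrev Cochain {X : Finset (Finset V)} (S : PSheaf R X) (k : ℕ) : Type :=
  (x : Face X k) → S.Stalk x.1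
variable {X : Finset (Finset V)}

/-- The simplicial coboundary map (with signs determined by the linear order on the
vertices): `(δ f)(y) = ∑_{v ∈ y} (-1)^{#\{a ∈ y : a < v\}} ⬝ res_{y ← y∖v} f(y ∖ v)`. -/
noncomputable def delta (hX : IsComplex X) (S : PSheaf R X) (k : ℕ) (f : Cochain S k) :
    Cochain S (k + 1) := fun y =>
  ∑ v ∈ y.1.attach,
    ((-1 : R) ^ (y.1.filter (fun a => a < v.1)).card) •
      (S.res (hX.2 y.1 y.2.1 (y.1.erase v.1) (Finset.erase_subset v.1 y.1)) y.2.1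
        (Finset.erase_subset v.1 y.1)
        (f ⟨y.1.erase v.1,
            hX.2 y.1 y.2.1 (y.1.erase v.1) (Finset.erase_subset v.1 y.1),
            by rw [Finset.card_erase_of_mem v.2, y.2.2]; omega⟩))

/-- The coboundary map as a linear map. -/
noncomputable def deltaHom (hX : IsComplex X) (S : PSheaf R X) (k : ℕ) :
    Cochain S k →ₗ[R] Cochain S (k + 1) where
  toFun := delta hX S k
  map_add' f g := by
    funext y
    show delta hX S k (f + g) y = delta hX S k f y + delta hX S k g y
    unfold delta
    rw [← Finset.sum_add_distrib]
    refine Finset.sum_congr rfl fun v _ => ?_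
    rw [← smul_add, ← map_add]
    rfl
  map_smul' c f := by
    funext y
    show delta hX S k (c • f) y = c • delta hX S k f y
    unfold delta
    rw [Finset.smul_sum]
    refine Finset.sum_congr rfl fun v _ => ?_
    rw [smul_comm c]
    congr 1
    rw [← map_smul]
    rfl

/-- The coboundaries: `B⁰ = 0` and `B^{k+1} = range (δ_k)`. -/
noncomputable def Bmod (hX : IsComplex X) (S : PSheaf R X) :
    (k : ℕ) → Submodule R (Cochain S k)
  | 0 => ⊥
  | (k + 1) => LinearMap.range (deltaHom hX S k)

/-- Sheaf cohomology `H^k(X, S) = Z^k / B^k`, computed from the simplicial cochain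
complex with coefficients in `S`. -/
noncomputable abbrev Hcoh (hX : IsComplex X) (S : PSheaf R X) (k : ℕ) : Type :=
  ↥(LinearMap.ker (deltaHom hX S k)) ⧸
    Submodule.comap (LinearMap.ker (deltaHom hX S k)).subtype (Bmod hX S k)

open scoped Classical

/-- The weighted support norm of a `k`-cochain: `‖f‖_ws = ∑_{x ∈ supp f} w(x)`. -/
noncomputable def wsNorm {R : Type} [CommRing R] {X : Finset (Finset V)}
    {S : PSheaf R X} (d : ℕ) {k : ℕ} (f : Cochain S k) : ℝ :=
  ∑ x ∈ (faceSet X (k + 1)).attach,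
    if f ⟨x.1, (Finset.mem_filter.mp x.2).1, (Finset.mem_filter.mp x.2).2⟩ ≠ 0
    then wt X d x.1 else 0

/-- `b` is a `k`-coboundary: `B⁰ = 0` and `B^{k+1} = im (δ_k)`. -/
def IsCobound (hX : IsComplex X) {R : Type} [CommRing R] (S : PSheaf R X) :
    (k : ℕ) → Cochain S k → Prop
  | 0, b => b = 0
  | (k + 1), b => ∃ g : Cochain S k, delta hX S k g = b

/-- `f ∈ C^m(X, S)` is locally minimal: for every nonempty face `z` of dimension
`≤ m - 1` and every `(m-1)`-cochain `h` supported on the faces containing `z`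
(these are exactly the cochains of the form `g^z` for `g ∈ C^{m - dim z - 2}(X_z, S_z)`),
`‖f + δ h‖_ws ≥ ‖f‖_ws`. -/
def LocallyMinimal {R : Type} [CommRing R] (hX : IsComplex X) (S : PSheaf R X)
    (d m : ℕ) (f : Cochain S m) : Prop :=
  ∀ z : Finset V, z ∈ X → z.Nonempty → z.card ≤ m →
    ∀ (j : ℕ) (hj : j + 1 = m) (h : Cochain S j),
      (∀ x : Face X j, ¬ z ⊆ x.1 → h x = 0) →
      wsNorm d f ≤
        wsNorm d (f + cast (congrArg (fun t => Cochain S t) hj) (delta hX S j h))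

section Basic
variable {S : PSheaf R X} {d m : ℕ}

lemma wt_nonneg (d : ℕ) (x : Finset V) : 0 ≤ wt X d x := by
  unfold wt; positivity

lemma wsNorm_nonneg (f : Cochain S m) : 0 ≤ wsNorm d f := by
  unfold wsNorm
  refine Finset.sum_nonneg fun x _ => ?_
  split <;> simp [wt_nonneg]

lemma wsNorm_zero : wsNorm d (0 : Cochain S m) = 0 := by
  unfold wsNorm
  refine Finset.sum_eq_zero fun x _ => ?_
  exact if_neg (not_not.mpr rfl)

lemma wsNorm_neg (f : Cochain S m) : wsNorm d (-f) = wsNorm d f := by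
  unfold wsNorm
  refine Finset.sum_congr rfl fun x _ => ?_
  simp [Pi.neg_apply, neg_eq_zero]
  exact if_congr (neg_eq_zero (a := f ⟨x.1, (Finset.mem_filter.mp x.2).1, (Finset.mem_filter.mp x.2).2⟩)) rfl rfl

lemma wsNorm_add_le (f g : Cochain S m) :
    wsNorm d (f + g) ≤ wsNorm d f + wsNorm d g := by
  unfold wsNorm
  rw [← Finset.sum_add_distrib]
  refine Finset.sum_le_sum fun x _ => ?_
  rw [show (f + g) ⟨x.1, (Finset.mem_filter.mp x.2).1, (Finset.mem_filter.mp x.2).2⟩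
    = f ⟨x.1, (Finset.mem_filter.mp x.2).1, (Finset.mem_filter.mp x.2).2⟩
      + g ⟨x.1, (Finset.mem_filter.mp x.2).1, (Finset.mem_filter.mp x.2).2⟩ from rfl]
  by_cases hf : f ⟨x.1, (Finset.mem_filter.mp x.2).1, (Finset.mem_filter.mp x.2).2⟩ = 0 <;>
    by_cases hg : g ⟨x.1, (Finset.mem_filter.mp x.2).1, (Finset.mem_filter.mp x.2).2⟩ = 0 <;>
    simp [Pi.add_apply, hf, hg, wt_nonneg] <;>
    split <;> simp [wt_nonneg] <;> positivity

lemma wt_pos (hX : IsComplex X) (hpure : IsPure X d) {x : Finset V} (hx : x ∈ X) :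
    0 < wt X d x := by
  obtain ⟨t, htX, hxt, htc⟩ := hpure x hx
  have htf : t ∈ faceSet X (d + 1) := Finset.mem_filter.mpr ⟨htX, htc⟩
  have h1 : 0 < ((faceSet X (d + 1)).filter fun y => x ⊆ y).card :=
    Finset.card_pos.mpr ⟨t, Finset.mem_filter.mpr ⟨htf, hxt⟩⟩
  have h2 : 0 < (faceSet X (d + 1)).card := Finset.card_pos.mpr ⟨t, htf⟩
  have h3 : 0 < (d + 1).choose x.card := by
    apply Nat.choose_pos
    calc x.card ≤ t.card := Finset.card_le_card hxt
    _ = d + 1 := htc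
  unfold wt
  positivity

lemma wsNorm_eq_zero (hX : IsComplex X) (hpure : IsPure X d) {f : Cochain S m}
    (h : wsNorm d f = 0) : f = 0 := by
  funext x
  show f x = 0
  have hxf : x.1 ∈ faceSet X (m + 1) := Finset.mem_filter.mpr ⟨x.2.1, x.2.2⟩
  have := (Finset.sum_eq_zero_iff_of_nonneg (fun y _ => by
    split <;> simp [wt_nonneg])).mp h ⟨x.1, hxf⟩ (Finset.mem_attach _ _)
  by_contra hne
  have hx' : (⟨x.1, (Finset.mem_filter.mp hxf).1, (Finset.mem_filter.mp hxf).2⟩ : Face X m) = x :=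
    Subtype.ext rfl
  rw [hx', if_pos hne] at this
  exact absurd this (ne_of_gt (wt_pos hX hpure x.2.1))

end Basic
section Delta
variable {S : PSheaf R X} {d : ℕ}

lemma delta_add (hX : IsComplex X) (j : ℕ) (f g : Cochain S j) :
    delta hX S j (f + g) = delta hX S j f + delta hX S j g :=
  (deltaHom hX S j).map_add f g

lemma delta_zero (hX : IsComplex X) (j : ℕ) :
    delta hX S j (0 : Cochain S j) = 0 :=
  (deltaHom hX S j).map_zero

lemma delta_neg (hX : IsComplex X) (j : ℕ) (f : Cochain S j) :
    delta hX S j (-f) = - delta hX S j f :=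
  (deltaHom hX S j).map_neg f

end Delta
section DeltaDelta

lemma res_f_congr {S : PSheaf R X} {j : ℕ} (f : Cochain S j) {z : Finset V} (hz : z ∈ X)
    {s t : Finset V} (hst : s = t) {hsX : s ∈ X} {htX : t ∈ X} {hs : s ⊆ z} {ht : t ⊆ z}
    {hcs : s.card = j + 1} {hct : t.card = j + 1} :
    S.res hsX hz hs (f ⟨s, hsX, hcs⟩) = S.res htX hz ht (f ⟨t, htX, hct⟩) := by
  subst hst; rfl

lemma sign_skew {z : Finset V} {a b : V} (ha : a ∈ z) (hab : a < b) :
    ((-1 : R) ^ ((z.filter (fun x => x < a)).card + ((z.erase a).filter (fun x => x < b)).card))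
      + ((-1 : R) ^ ((z.filter (fun x => x < b)).card +
          ((z.erase b).filter (fun x => x < a)).card)) = 0 := by
  have h1 : (z.erase a).filter (fun x => x < b) = (z.filter (fun x => x < b)).erase a := by
    ext c; simp only [Finset.mem_erase, Finset.mem_filter]; tauto
  have h2 : (z.erase b).filter (fun x => x < a) = z.filter (fun x => x < a) := by
    ext c
    simp only [Finset.mem_erase, Finset.mem_filter]
    constructor
    · rintro ⟨⟨-, hc⟩, hlt⟩; exact ⟨hc, hlt⟩
    · rintro ⟨hc, hlt⟩; exact ⟨⟨ne_of_lt (lt_trans hlt hab), hc⟩, hlt⟩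
  have ha' : a ∈ z.filter (fun x => x < b) := Finset.mem_filter.mpr ⟨ha, hab⟩
  rw [h1, h2, Finset.card_erase_of_mem ha']
  have hm1 : 1 ≤ (z.filter (fun x => x < b)).card := Finset.card_pos.mpr ⟨a, ha'⟩
  obtain ⟨m', hm⟩ : ∃ m', (z.filter (fun x => x < b)).card = m' + 1 :=
    ⟨(z.filter (fun x => x < b)).card - 1, by omega⟩
  rw [hm]
  have e1 : (z.filter (fun x => x < a)).card + (m' + 1 - 1)
      = (z.filter (fun x => x < a)).card + m' := by omega
  have e2 : m' + 1 + (z.filter (fun x => x < a)).card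
      = ((z.filter (fun x => x < a)).card + m') + 1 := by omega
  rw [e1, e2, pow_succ]
  ring

/-- Auxiliary pair-indexed term for the proof that `δ ∘ δ = 0`. -/
noncomputable def ddT (hX : IsComplex X) (S : PSheaf R X) (j : ℕ) (f : Cochain S j)
    (z : Finset V) (hzX : z ∈ X) (hzc : z.card = j + 1 + 1 + 1) (p : V × V) : S.Stalk z :=
  if hp : p.1 ∈ z ∧ p.2 ∈ z ∧ p.2 ≠ p.1 then
    ((-1 : R) ^ ((z.filter (fun a => a < p.1)).card +
        ((z.erase p.1).filter (fun a => a < p.2)).card)) •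
      S.res
        (hX.2 z hzX ((z.erase p.1).erase p.2)
          ((Finset.erase_subset p.2 (z.erase p.1)).trans (Finset.erase_subset p.1 z)))
        hzX
        ((Finset.erase_subset p.2 (z.erase p.1)).trans (Finset.erase_subset p.1 z))
        (f ⟨(z.erase p.1).erase p.2,
          hX.2 z hzX ((z.erase p.1).erase p.2)
            ((Finset.erase_subset p.2 (z.erase p.1)).trans (Finset.erase_subset p.1 z)),
          by
            rw [Finset.card_erase_of_mem (Finset.mem_erase.mpr ⟨hp.2.2, hp.2.1⟩),
              Finset.card_erase_of_mem hp.1, hzc]; omega⟩)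
  else 0

lemma ddT_diag (hX : IsComplex X) (S : PSheaf R X) (j : ℕ) (f : Cochain S j)
    (z : Finset V) (hzX : z ∈ X) (hzc : z.card = j + 1 + 1 + 1) (a : V) :
    ddT hX S j f z hzX hzc (a, a) = 0 := by
  rw [ddT, dif_neg]; simp

lemma ddT_skew (hX : IsComplex X) (S : PSheaf R X) (j : ℕ) (f : Cochain S j)
    (z : Finset V) (hzX : z ∈ X) (hzc : z.card = j + 1 + 1 + 1) (a b : V) :
    ddT hX S j f z hzX hzc (a, b) + ddT hX S j f z hzX hzc (b, a) = 0 := by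
  by_cases hab : a = b
  · subst hab; rw [ddT_diag]; simp
  by_cases haz : a ∈ z
  · by_cases hbz : b ∈ z
    · rw [ddT, ddT, dif_pos ⟨haz, hbz, fun h => hab h.symm⟩, dif_pos ⟨hbz, haz, hab⟩]
      have hca : ((z.erase b).erase a).card = j + 1 := by
        rw [Finset.card_erase_of_mem (Finset.mem_erase.mpr ⟨hab, haz⟩),
          Finset.card_erase_of_mem hbz, hzc]; omega
      have hcb : ((z.erase a).erase b).card = j + 1 := by
        rw [Finset.card_erase_of_mem (Finset.mem_erase.mpr ⟨fun h => hab h.symm, hbz⟩),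
          Finset.card_erase_of_mem haz, hzc]; omega
      rw [res_f_congr (hcs := hca) (hct := hcb)
        (htX := hX.2 z hzX _ ((Finset.erase_subset _ _).trans (Finset.erase_subset _ _)))
        (ht := (Finset.erase_subset _ _).trans (Finset.erase_subset _ _)) f hzX (Finset.erase_right_comm :
        (z.erase b).erase a = (z.erase a).erase b)]
      rw [← add_smul]
      rcases lt_or_gt_of_ne hab with h | h
      · rw [sign_skew haz h, zero_smul]
      · rw [add_comm ((-1 : R) ^ _), sign_skew hbz h, zero_smul]
    · rw [ddT, ddT, dif_neg (by tauto), dif_neg (by tauto)]; simp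
  · rw [ddT, ddT, dif_neg (by tauto), dif_neg (by tauto)]; simp

end DeltaDelta
lemma delta_delta (hX : IsComplex X) (S : PSheaf R X) (j : ℕ) (f : Cochain S j) :
    delta hX S (j + 1) (delta hX S j f) = 0 := by
  funext y
  obtain ⟨z, hzX, hzc⟩ := y
  show (delta hX S (j + 1) (delta hX S j f)) ⟨z, hzX, hzc⟩ = 0
  have main : (delta hX S (j + 1) (delta hX S j f)) ⟨z, hzX, hzc⟩
      = ∑ p ∈ z ×ˢ z, ddT hX S j f z hzX hzc p := by
    rw [Finset.sum_product]
    rw [← Finset.sum_attach z (fun v => ∑ w ∈ z, ddT hX S j f z hzX hzc (v, w))]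
    simp only [delta]
    refine Finset.sum_congr rfl fun v _ => ?_
    rw [← Finset.sum_erase z (ddT_diag hX S j f z hzX hzc v.1)]
    rw [← Finset.sum_attach (z.erase v.1) (fun w => ddT hX S j f z hzX hzc (v.1, w))]
    rw [map_sum, Finset.smul_sum]
    refine Finset.sum_congr rfl fun w _ => ?_
    rw [ddT, dif_pos ⟨v.2, (Finset.mem_erase.mp w.2).2, (Finset.mem_erase.mp w.2).1⟩]
    rw [map_smul, smul_smul, ← pow_add, S.res_trans]
  rw [main]
  refine Finset.sum_involution (fun p _ => (p.2, p.1))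
    (fun p _ => ddT_skew hX S j f z hzX hzc p.1 p.2)
    (fun p hp hne => ?_) (fun p hp => ?_) (fun p hp => rfl)
  · intro h
    apply hne
    have : p.2 = p.1 := congrArg Prod.fst h
    rw [ddT, dif_neg]
    tauto
  · simp only [Finset.mem_product] at hp ⊢
    exact ⟨hp.2, hp.1⟩
section Counting
variable {S : PSheaf R X} {d m : ℕ}

lemma sum_N_eq (hX : IsComplex X) (m : ℕ) :
    ∑ x ∈ faceSet X m, ((faceSet X (d + 1)).filter fun y => x ⊆ y).card
      = (d + 1).choose m * (faceSet X (d + 1)).card := by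
  have : ∀ x ∈ faceSet X m, ((faceSet X (d + 1)).filter fun y => x ⊆ y).card
      = ∑ y ∈ faceSet X (d + 1), if x ⊆ y then 1 else 0 := fun x _ => Finset.card_filter _ _
  rw [Finset.sum_congr rfl this, Finset.sum_comm]
  have h2 : ∀ y ∈ faceSet X (d + 1),
      (∑ x ∈ faceSet X m, if x ⊆ y then 1 else 0) = (d + 1).choose m := by
    intro y hy
    rw [← Finset.card_filter]
    have hfy : (faceSet X m).filter (fun x => x ⊆ y) = y.powersetCard m := by
      ext x
      simp only [Finset.mem_filter, faceSet, Finset.mem_powersetCard]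
      constructor
      · rintro ⟨⟨-, hc⟩, hxy⟩; exact ⟨hxy, hc⟩
      · rintro ⟨hxy, hc⟩
        exact ⟨⟨hX.2 y (Finset.mem_filter.mp hy).1 x hxy, hc⟩, hxy⟩
    rw [hfy, Finset.card_powersetCard, (Finset.mem_filter.mp hy).2]
  rw [Finset.sum_congr rfl h2, Finset.sum_const, smul_eq_mul, mul_comm]

lemma wsNorm_le_one (hX : IsComplex X) (f : Cochain S m) : wsNorm d f ≤ 1 := by
  have h1 : wsNorm d f ≤ ∑ x ∈ faceSet X (m + 1), wt X d x := by
    rw [← Finset.sum_attach (faceSet X (m + 1)) (fun x => wt X d x)]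
    unfold wsNorm
    refine Finset.sum_le_sum fun x _ => ?_
    split
    · exact le_refl _
    · exact wt_nonneg d x.1
  refine h1.trans ?_
  have h2 : ∑ x ∈ faceSet X (m + 1), wt X d x
      = ((d + 1).choose (m + 1) : ℝ)⁻¹ * ((faceSet X (d + 1)).card : ℝ)⁻¹ *
        ((d + 1).choose (m + 1) * (faceSet X (d + 1)).card : ℕ) := by
    rw [← sum_N_eq hX (m + 1), Nat.cast_sum, Finset.mul_sum]
    refine Finset.sum_congr rfl fun x hx => ?_
    unfold wt
    rw [(Finset.mem_filter.mp hx).2]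
  rw [h2]
  rcases Nat.eq_zero_or_pos ((d + 1).choose (m + 1)) with hC | hC
  · simp [hC]
  rcases Nat.eq_zero_or_pos (faceSet X (d + 1)).card with hM | hM
  · simp [hM]
  have hC' : ((d + 1).choose (m + 1) : ℝ) ≠ 0 := Nat.cast_ne_zero.mpr (by omega)
  have hM' : ((faceSet X (d + 1)).card : ℝ) ≠ 0 := Nat.cast_ne_zero.mpr (by omega)
  push_cast
  exact le_of_eq (by field_simp)

lemma wsNorm_quant (f : Cochain S m) : ∃ n : ℕ, wsNorm d f
    = n * (((d + 1).choose (m + 1) : ℝ)⁻¹ * ((faceSet X (d + 1)).card : ℝ)⁻¹) := by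
  refine ⟨∑ x ∈ (faceSet X (m + 1)).attach,
    if f ⟨x.1, (Finset.mem_filter.mp x.2).1, (Finset.mem_filter.mp x.2).2⟩ ≠ 0
    then ((faceSet X (d + 1)).filter fun y => x.1 ⊆ y).card else 0, ?_⟩
  unfold wsNorm
  rw [Nat.cast_sum, Finset.sum_mul]
  refine Finset.sum_congr rfl fun x _ => ?_
  split
  · unfold wt
    rw [(Finset.mem_filter.mp x.2).2]
    push_cast
    ring
  · simp

lemma star_count_bound (hX : IsComplex X) (j : ℕ) {z : Finset V} (hzX : z ∈ X)
    (hzne : z.Nonempty) (Q : ℕ)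
    (hQ : ∀ v : V, ({v} : Finset V) ∈ X →
      ((faceSet X (d + 1)).filter (fun t => v ∈ t)).card ≤ Q) :
    ∑ x ∈ (faceSet X (j + 1)).filter (fun x => z ⊆ x),
      ((faceSet X (d + 1)).filter fun y => x ⊆ y).card ≤ Q * d.choose j := by
  obtain ⟨v, hv⟩ := hzne
  have hvX : ({v} : Finset V) ∈ X := hX.2 z hzX {v} (Finset.singleton_subset_iff.mpr hv)
  have step : ∀ x ∈ (faceSet X (j + 1)).filter (fun x => z ⊆ x),
      ((faceSet X (d + 1)).filter fun y => x ⊆ y).card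
      = ∑ y ∈ faceSet X (d + 1), if x ⊆ y then 1 else 0 := fun x _ => Finset.card_filter _ _
  rw [Finset.sum_congr rfl step, Finset.sum_comm]
  have point : ∀ y ∈ faceSet X (d + 1),
      (∑ x ∈ (faceSet X (j + 1)).filter (fun x => z ⊆ x), if x ⊆ y then 1 else 0)
      ≤ if v ∈ y then d.choose j else 0 := by
    intro y hy
    rw [← Finset.card_filter]
    by_cases hvy : v ∈ y
    · rw [if_pos hvy]
      have hinj : Set.InjOn (fun x : Finset V => x.erase v)
          ↑(((faceSet X (j + 1)).filter (fun x => z ⊆ x)).filter (fun x => x ⊆ y)) := by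
        intro x₁ h₁ x₂ h₂ he
        simp only [Finset.coe_filter, Set.mem_setOf_eq, Finset.mem_filter] at h₁ h₂
        have hv₁ : v ∈ x₁ := h₁.1.2 hv
        have hv₂ : v ∈ x₂ := h₂.1.2 hv
        rw [← Finset.insert_erase hv₁, ← Finset.insert_erase hv₂]
        simp only at he
        rw [he]
      have hmaps : ∀ x ∈ ((faceSet X (j + 1)).filter (fun x => z ⊆ x)).filter (fun x => x ⊆ y),
          x.erase v ∈ (y.erase v).powersetCard j := by
        intro x hx
        simp only [Finset.mem_filter] at hx
        refine Finset.mem_powersetCard.mpr ⟨Finset.erase_subset_erase v hx.2, ?_⟩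
        rw [Finset.card_erase_of_mem (hx.1.2 hv), (Finset.mem_filter.mp hx.1.1).2]
        omega
      calc (((faceSet X (j + 1)).filter (fun x => z ⊆ x)).filter (fun x => x ⊆ y)).card
          ≤ ((y.erase v).powersetCard j).card :=
            Finset.card_le_card_of_injOn _ hmaps hinj
        _ = d.choose j := by
            rw [Finset.card_powersetCard, Finset.card_erase_of_mem hvy,
              (Finset.mem_filter.mp hy).2]
            norm_num
    · rw [if_neg hvy]
      have : ((faceSet X (j + 1)).filter (fun x => z ⊆ x)).filter (fun x => x ⊆ y) = ∅ := by
        refine Finset.filter_eq_empty_iff.mpr fun x hx => fun hxy => ?_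
        exact hvy (hxy ((Finset.mem_filter.mp hx).2 hv))
      rw [this]
      simp
  calc ∑ y ∈ faceSet X (d + 1),
        (∑ x ∈ (faceSet X (j + 1)).filter (fun x => z ⊆ x), if x ⊆ y then 1 else 0)
      ≤ ∑ y ∈ faceSet X (d + 1), if v ∈ y then d.choose j else 0 :=
        Finset.sum_le_sum point
    _ = ((faceSet X (d + 1)).filter (fun t => v ∈ t)).card * d.choose j := by
        rw [← Finset.sum_filter, Finset.sum_const, smul_eq_mul]
    _ ≤ Q * d.choose j := Nat.mul_le_mul_right _ (hQ v hvX)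

lemma wsNorm_le_star {j : ℕ} (z : Finset V) (h : Cochain S j)
    (hsupp : ∀ x : Face X j, ¬ z ⊆ x.1 → h x = 0) :
    wsNorm d h ≤ ∑ x ∈ (faceSet X (j + 1)).filter (fun x => z ⊆ x), wt X d x := by
  rw [Finset.sum_filter,
    ← Finset.sum_attach (faceSet X (j + 1)) (fun x => if z ⊆ x then wt X d x else 0)]
  unfold wsNorm
  refine Finset.sum_le_sum fun x _ => ?_
  by_cases hz : z ⊆ x.1
  · rw [if_pos hz]
    split
    · exact le_refl _
    · exact wt_nonneg d x.1
  · rw [if_neg hz, if_neg]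
    simp only [ne_eq, not_not]
    exact hsupp _ hz

lemma star_wt_bound (hX : IsComplex X) (j : ℕ) (hjd : j ≤ d) {z : Finset V} (hzX : z ∈ X)
    (hzne : z.Nonempty) (Q : ℕ)
    (hQ : ∀ v : V, ({v} : Finset V) ∈ X →
      ((faceSet X (d + 1)).filter (fun t => v ∈ t)).card ≤ Q) :
    ∑ x ∈ (faceSet X (j + 1)).filter (fun x => z ⊆ x), wt X d x
      ≤ (j + 1 : ℝ) * Q * ((d + 1 : ℝ))⁻¹ * ((faceSet X (d + 1)).card : ℝ)⁻¹ := by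
  have hsum : ∑ x ∈ (faceSet X (j + 1)).filter (fun x => z ⊆ x), wt X d x
      = ((d + 1).choose (j + 1) : ℝ)⁻¹ * ((faceSet X (d + 1)).card : ℝ)⁻¹ *
        ((∑ x ∈ (faceSet X (j + 1)).filter (fun x => z ⊆ x),
          ((faceSet X (d + 1)).filter fun y => x ⊆ y).card : ℕ) : ℝ) := by
    rw [Nat.cast_sum, Finset.mul_sum]
    refine Finset.sum_congr rfl fun x hx => ?_
    unfold wt
    rw [(Finset.mem_filter.mp (Finset.mem_filter.mp hx).1).2]
  rw [hsum]
  have hcb := star_count_bound (d := d) hX j hzX hzne Q hQ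
  have hkeyn : (d + 1) * d.choose j = (j + 1) * ((d + 1).choose (j + 1)) := by
    calc (d + 1) * d.choose j = Nat.succ d * d.choose j := rfl
      _ = (d + 1).choose (j + 1) * (j + 1) := Nat.add_one_mul_choose_eq d j
      _ = (j + 1) * ((d + 1).choose (j + 1)) := mul_comm _ _
  have hkey : ((d:ℝ) + 1) * (d.choose j : ℝ) = ((j:ℝ) + 1) * ((d + 1).choose (j + 1) : ℝ) := by
    exact_mod_cast congrArg (Nat.cast (R := ℝ)) hkeyn
  have hCpos : 0 < (d + 1).choose (j + 1) := Nat.choose_pos (by omega)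
  have hC' : (0:ℝ) < ((d + 1).choose (j + 1) : ℝ) := by exact_mod_cast hCpos
  have hM : (0:ℝ) ≤ ((faceSet X (d + 1)).card : ℝ)⁻¹ := by positivity
  calc ((d + 1).choose (j + 1) : ℝ)⁻¹ * ((faceSet X (d + 1)).card : ℝ)⁻¹ *
        ((∑ x ∈ (faceSet X (j + 1)).filter (fun x => z ⊆ x),
          ((faceSet X (d + 1)).filter fun y => x ⊆ y).card : ℕ) : ℝ)
      ≤ ((d + 1).choose (j + 1) : ℝ)⁻¹ * ((faceSet X (d + 1)).card : ℝ)⁻¹ *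
        ((Q * d.choose j : ℕ) : ℝ) := by
        refine mul_le_mul_of_nonneg_left ?_ (by positivity)
        exact_mod_cast hcb
    _ = (j + 1 : ℝ) * Q * ((d + 1 : ℝ))⁻¹ * ((faceSet X (d + 1)).card : ℝ)⁻¹ := by
        have hd1 : ((d:ℝ) + 1) ≠ 0 := by positivity
        have hC0 : ((d + 1).choose (j + 1) : ℝ) ≠ 0 := ne_of_gt hC'
        have hCdj : (d.choose j : ℝ)
            = ((j:ℝ) + 1) * ((d + 1).choose (j + 1) : ℝ) / ((d:ℝ) + 1) := by
          field_simp
          linear_combination hkey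
        push_cast
        rw [hCdj]
        rw [show ((d + 1).choose (j + 1) : ℝ)⁻¹ * ((faceSet X (d + 1)).card : ℝ)⁻¹ *
            ((Q : ℝ) * (((j:ℝ) + 1) * ((d + 1).choose (j + 1) : ℝ) / ((d:ℝ) + 1)))
            = ((j:ℝ) + 1) * Q * ((d:ℝ) + 1)⁻¹ * ((faceSet X (d + 1)).card : ℝ)⁻¹ *
              (((d + 1).choose (j + 1) : ℝ)⁻¹ * ((d + 1).choose (j + 1) : ℝ)) from by ring]
        rw [inv_mul_cancel₀ hC0, mul_one]
  
end Counting
section Approx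
variable {S : PSheaf R X} {d : ℕ}

lemma locallyMinimal_zero (hX : IsComplex X) (S : PSheaf R X) (d m : ℕ) :
    LocallyMinimal hX S d m (0 : Cochain S m) := by
  intro z _ _ _ j' hj' h' _
  rw [wsNorm_zero]
  exact wsNorm_nonneg _

lemma approx (hX : IsComplex X) (hpure : IsPure X d) (j : ℕ) (hjd : j + 1 ≤ d)
    (Q : ℕ)
    (hQ : ∀ v : V, ({v} : Finset V) ∈ X →
      ((faceSet X (d + 1)).filter (fun t => v ∈ t)).card ≤ Q)
    (u c : ℝ)
    (hu : u = ((d + 1).choose (j + 2) : ℝ)⁻¹ * ((faceSet X (d + 1)).card : ℝ)⁻¹)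
    (hc : c = (j + 1 : ℝ) * Q * ((d + 1).choose (j + 2) : ℝ) / (d + 1 : ℝ)) :
    ∀ (n : ℕ) (h : Cochain S (j + 1)), wsNorm d h ≤ n * u →
    ∃ g : Cochain S j,
      LocallyMinimal hX S d (j + 1) (h + delta hX S j g) ∧
      wsNorm d (h + delta hX S j g) ≤ wsNorm d h ∧
      wsNorm d g ≤ c * (wsNorm d h - wsNorm d (h + delta hX S j g)) := by
  have hC2 : 0 < (d + 1).choose (j + 2) := Nat.choose_pos (by omega)
  have hM : 0 < (faceSet X (d + 1)).card := by
    obtain ⟨s, hs⟩ := hX.1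
    obtain ⟨t, htX, -, htc⟩ := hpure s hs
    exact Finset.card_pos.mpr ⟨t, Finset.mem_filter.mpr ⟨htX, htc⟩⟩
  have hu0 : 0 < u := by
    rw [hu]
    have h1 : (0:ℝ) < ((d + 1).choose (j + 2) : ℝ) := by exact_mod_cast hC2
    have h2 : (0:ℝ) < ((faceSet X (d + 1)).card : ℝ) := by exact_mod_cast hM
    positivity
  have hc0 : 0 ≤ c := by rw [hc]; positivity
  have hcu : c * u = (j + 1 : ℝ) * Q * ((d + 1 : ℝ))⁻¹ * ((faceSet X (d + 1)).card : ℝ)⁻¹ := by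
    rw [hc, hu]
    have h1 : ((d + 1).choose (j + 2) : ℝ) ≠ 0 := by exact_mod_cast hC2.ne'
    have h2 : ((d:ℝ) + 1) ≠ 0 := by positivity
    field_simp
  intro n
  induction n with
  | zero =>
    intro h hn
    have h0 : h = 0 := wsNorm_eq_zero hX hpure
      (le_antisymm (by simpa using hn) (wsNorm_nonneg h))
    subst h0
    refine ⟨0, ?_, ?_, ?_⟩
    · rw [delta_zero, add_zero]
      exact locallyMinimal_zero hX S d (j + 1)
    · rw [delta_zero, add_zero]
    · rw [delta_zero, add_zero, sub_self, mul_zero, wsNorm_zero]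
  | succ n ih =>
    intro h hn
    by_cases hlm : LocallyMinimal hX S d (j + 1) h
    · refine ⟨0, ?_, ?_, ?_⟩
      · rw [delta_zero, add_zero]; exact hlm
      · rw [delta_zero, add_zero]
      · rw [delta_zero, add_zero, sub_self, mul_zero, wsNorm_zero]
    · unfold LocallyMinimal at hlm
      push_neg at hlm
      obtain ⟨z, hzX, hzne, hzc, j', hj', gz, hgz, hdec⟩ := hlm
      have hj'' : j = j' := by omega
      subst hj''
      have hcast : cast (congrArg (fun t => Cochain S t) hj') (delta hX S j gz)
          = delta hX S j gz := eq_of_heq (cast_heq _ _)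
      rw [hcast] at hdec
      obtain ⟨n₂, hn₂⟩ := wsNorm_quant (d := d) h
      obtain ⟨n₁, hn₁⟩ := wsNorm_quant (d := d) (h + delta hX S j gz)
      rw [← hu] at hn₁ hn₂
      have hlt : n₁ < n₂ := by
        have h1 : (n₁ : ℝ) * u < (n₂ : ℝ) * u := by rw [← hn₁, ← hn₂]; exact hdec
        have h2 : (n₁ : ℝ) < (n₂ : ℝ) := lt_of_mul_lt_mul_right h1 (le_of_lt hu0)
        exact_mod_cast h2
      have hle : (n₂ : ℝ) ≤ n + 1 := by
        have := hn
        rw [hn₂] at this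
        have := le_of_mul_le_mul_right this hu0
        exact_mod_cast this
      have hn₁n : wsNorm d (h + delta hX S j gz) ≤ n * u := by
        rw [hn₁]
        have : (n₁ : ℝ) ≤ n := by
          have h1 : (n₁ : ℕ) < n₂ := hlt
          have h2 : n₂ ≤ n + 1 := by exact_mod_cast hle
          exact_mod_cast (by omega : n₁ ≤ n)
        exact mul_le_mul_of_nonneg_right this (le_of_lt hu0)
      obtain ⟨g', hg'lm, hg'le, hg'bd⟩ := ih (h + delta hX S j gz) hn₁n
      have hdd : h + delta hX S j (gz + g') = (h + delta hX S j gz) + delta hX S j g' := by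
        rw [delta_add]
        exact (add_assoc _ _ _).symm
      have hgzbd : wsNorm d gz ≤ c * u := by
        rw [hcu]
        exact (wsNorm_le_star z gz hgz).trans
          (star_wt_bound hX j (by omega) hzX hzne Q hQ)
      have hquant : wsNorm d (h + delta hX S j gz) + u ≤ wsNorm d h := by
        rw [hn₁, hn₂]
        have : ((n₁ : ℝ) + 1) ≤ n₂ := by exact_mod_cast hlt
        nlinarith [le_of_lt hu0]
      refine ⟨gz + g', ?_, ?_, ?_⟩
      · rw [hdd]; exact hg'lm
      · rw [hdd]; exact hg'le.trans (le_of_lt hdec)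
      · rw [hdd]
        calc wsNorm d (gz + g') ≤ wsNorm d gz + wsNorm d g' := wsNorm_add_le gz g'
          _ ≤ c * u + c * (wsNorm d (h + delta hX S j gz)
              - wsNorm d ((h + delta hX S j gz) + delta hX S j g')) := by
              exact add_le_add hgzbd hg'bd
          _ ≤ c * (wsNorm d h - wsNorm d ((h + delta hX S j gz) + delta hX S j g')) := by
              nlinarith [hquant]

end Approx

/-- Let `(X, S)` be a sheaved pure `d`-complex, `0 ≤ k ≤ d - 2`, with
`S` nonvanishing on `X(k) ∪ X(k+1) ∪ X(k+2)`, and let `Q ≥ D(X)` bound the number of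
`d`-faces containing any vertex.  If `(X, S)` `β`-expands `α`-small locally minimal
`k`-cocycles and `β'`-expands `α'`-small locally minimal `(k+1)`-cocycles (`β, β' > 0`),
then `(X, S)` is a `(min{α', (d+1)/((k+1)Q) ⬝ C(d+1,k+2)⁻¹}, α)`-cosystolic expander in
dimension `k`: (C1) `‖δ_k f‖_ws ≥ ε ⬝ dist_ws(f, Z^k)` for every `f ∈ C^k`, and
(C2) `‖f‖_ws ≥ α` for every `f ∈ Z^k ∖ B^k`. -/
theorem cosystolic_expansion_of_small_expansion {R : Type} [CommRing R]
    (X : Finset (Finset V)) (d k : ℕ) (hX : IsComplex X) (hpure : IsPure X d)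
    (hk : k + 2 ≤ d) (S : PSheaf R X)
    (hnt : ∀ j ∈ ({k + 1, k + 2, k + 3} : Finset ℕ), ∀ x ∈ faceSet X j,
      Nontrivial (S.Stalk x))
    (Q : ℕ)
    (hQ : ∀ v : V, ({v} : Finset V) ∈ X →
      ((faceSet X (d + 1)).filter (fun t => v ∈ t)).card ≤ Q)
    (α β α' β' : ℝ) (hβ : 0 < β) (hβ' : 0 < β')
    (hexp : ∀ f : Cochain S k, delta hX S k f = 0 →
      LocallyMinimal hX S d k f → wsNorm d f < α →
      β * wsNorm d f ≤ wsNorm d (delta hX S k f))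
    (hexp' : ∀ f : Cochain S (k + 1), delta hX S (k + 1) f = 0 →
      LocallyMinimal hX S d (k + 1) f → wsNorm d f < α' →
      β' * wsNorm d f ≤ wsNorm d (delta hX S (k + 1) f)) :
    (∀ f : Cochain S k, ∃ g : Cochain S k, delta hX S k g = 0 ∧
      min α' ((d + 1 : ℝ) / ((k + 1 : ℝ) * (Q : ℝ) * ((d + 1).choose (k + 2) : ℝ)))
        * wsNorm d (f - g) ≤ wsNorm d (delta hX S k f)) ∧
    (∀ f : Cochain S k, delta hX S k f = 0 → ¬ IsCobound hX S k f →
      α ≤ wsNorm d f) := by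
  constructor
  · -- (C1)
    intro f
    by_cases hpos : 0 < min α'
        ((d + 1 : ℝ) / ((k + 1 : ℝ) * (Q : ℝ) * ((d + 1).choose (k + 2) : ℝ)))
    · have hα' : 0 < α' := lt_of_lt_of_le hpos (min_le_left _ _)
      have hfrac : 0 < (d + 1 : ℝ) / ((k + 1 : ℝ) * (Q : ℝ) * ((d + 1).choose (k + 2) : ℝ)) :=
        lt_of_lt_of_le hpos (min_le_right _ _)
      have hden : 0 < (k + 1 : ℝ) * (Q : ℝ) * ((d + 1).choose (k + 2) : ℝ) := by
        rcases div_pos_iff.mp hfrac with ⟨-, h⟩ | ⟨h, -⟩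
        · exact h
        · exfalso
          have hd : (0:ℝ) < (d:ℝ) + 1 := by positivity
          linarith
      have hc0 : 0 < (k + 1 : ℝ) * (Q : ℝ) * ((d + 1).choose (k + 2) : ℝ) / (d + 1 : ℝ) :=
        div_pos hden (by positivity)
      obtain ⟨n, hn⟩ := wsNorm_quant (d := d) (delta hX S k f)
      obtain ⟨g, hglm, hgle, hgbd⟩ := approx hX hpure k (by omega) Q hQ
        (((d + 1).choose (k + 2) : ℝ)⁻¹ * ((faceSet X (d + 1)).card : ℝ)⁻¹)
        ((k + 1 : ℝ) * (Q : ℝ) * ((d + 1).choose (k + 2) : ℝ) / (d + 1 : ℝ))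
        rfl rfl n (delta hX S k f) (le_of_eq hn)
      have hFcoc : delta hX S (k + 1) (delta hX S k f + delta hX S k g) = 0 := by
        rw [← delta_add]
        exact delta_delta hX S k (f + g)
      by_cases hsmall : wsNorm d (delta hX S k f + delta hX S k g) < α'
      · have hβF := hexp' (delta hX S k f + delta hX S k g) hFcoc hglm hsmall
        rw [hFcoc, wsNorm_zero] at hβF
        have hF0 : wsNorm d (delta hX S k f + delta hX S k g) = 0 :=
          le_antisymm (le_of_mul_le_mul_left (by rw [mul_zero]; exact hβF) hβ')
            (wsNorm_nonneg _)
        have hF : delta hX S k f + delta hX S k g = 0 := wsNorm_eq_zero hX hpure hF0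
        refine ⟨f + g, ?_, ?_⟩
        · rw [delta_add]; exact hF
        · have hsub : f - (f + g) = -g := by abel
          rw [hsub, wsNorm_neg]
          rw [hF0, sub_zero] at hgbd
          have hεle : min α' ((d + 1 : ℝ) / ((k + 1 : ℝ) * (Q : ℝ) * ((d + 1).choose (k + 2) : ℝ)))
              ≤ ((k + 1 : ℝ) * (Q : ℝ) * ((d + 1).choose (k + 2) : ℝ) / (d + 1 : ℝ))⁻¹ := by
            rw [inv_div]
            exact min_le_right _ _
          calc min α' ((d + 1 : ℝ) / ((k + 1 : ℝ) * (Q : ℝ) * ((d + 1).choose (k + 2) : ℝ)))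
                * wsNorm d g
              ≤ ((k + 1 : ℝ) * (Q : ℝ) * ((d + 1).choose (k + 2) : ℝ) / (d + 1 : ℝ))⁻¹
                * wsNorm d g := mul_le_mul_of_nonneg_right hεle (wsNorm_nonneg g)
            _ ≤ ((k + 1 : ℝ) * (Q : ℝ) * ((d + 1).choose (k + 2) : ℝ) / (d + 1 : ℝ))⁻¹
                * (((k + 1 : ℝ) * (Q : ℝ) * ((d + 1).choose (k + 2) : ℝ) / (d + 1 : ℝ))
                  * wsNorm d (delta hX S k f)) :=
                mul_le_mul_of_nonneg_left hgbd (inv_nonneg.mpr (le_of_lt hc0))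
            _ = wsNorm d (delta hX S k f) := by
                rw [← mul_assoc, inv_mul_cancel₀ (ne_of_gt hc0), one_mul]
      · refine ⟨0, delta_zero hX k, ?_⟩
        have h1 : wsNorm d (f - 0) ≤ 1 := by rw [sub_zero]; exact wsNorm_le_one hX f
        calc min α' ((d + 1 : ℝ) / ((k + 1 : ℝ) * (Q : ℝ) * ((d + 1).choose (k + 2) : ℝ)))
              * wsNorm d (f - 0)
            ≤ α' * 1 := mul_le_mul (min_le_left _ _) h1 (wsNorm_nonneg _) (le_of_lt hα')
          _ = α' := mul_one α'
          _ ≤ wsNorm d (delta hX S k f + delta hX S k g) := not_lt.mp hsmall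
          _ ≤ wsNorm d (delta hX S k f) := hgle
    · refine ⟨0, delta_zero hX k, ?_⟩
      refine le_trans (mul_nonpos_iff.mpr (Or.inr ⟨le_of_not_gt hpos, wsNorm_nonneg _⟩))
        (wsNorm_nonneg _)
  · -- (C2)
    intro f hcoc hnb
    by_contra hlt
    push_neg at hlt
    apply hnb
    clear hnb hnt hexp' hβ' β' α'
    cases k with
    | zero =>
      have hlmf : LocallyMinimal hX S d 0 f := by
        intro z _ hzne hzc
        exact absurd (Finset.card_pos.mpr hzne) (by omega)
      have hβf := hexp f hcoc hlmf hlt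
      rw [hcoc, wsNorm_zero] at hβf
      have h0 : wsNorm d f = 0 :=
        le_antisymm (le_of_mul_le_mul_left (by rw [mul_zero]; exact hβf) hβ) (wsNorm_nonneg f)
      show f = 0
      exact wsNorm_eq_zero hX hpure h0
    | succ j =>
      obtain ⟨n, hn⟩ := wsNorm_quant (d := d) f
      obtain ⟨g, hglm, hgle, -⟩ := approx hX hpure j (by omega) Q hQ _ _ rfl rfl n f (le_of_eq hn)
      have hFcoc : delta hX S (j + 1) (f + delta hX S j g) = 0 := by
        rw [delta_add, hcoc, delta_delta hX S j g, add_zero]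
      have hβf := hexp (f + delta hX S j g) hFcoc hglm (lt_of_le_of_lt hgle hlt)
      rw [hFcoc, wsNorm_zero] at hβf
      have h0 : f + delta hX S j g = 0 := wsNorm_eq_zero hX hpure
        (le_antisymm (le_of_mul_le_mul_left (by rw [mul_zero]; exact hβf) hβ) (wsNorm_nonneg _))
      exact ⟨-g, by rw [delta_neg]; exact neg_eq_of_add_eq_zero_left h0⟩
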